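/- Under the product and union-bound uncertainty assumptions, let X(1:n), Y(1:n) satisfy the factorization conditions with 0 ≤ δ < (min over i, x(i) of m_𝒴(⟦Y(i)|x(i)⟧)) / (max over i of |⟦X(i)⟧|), and suppose either (X(1:n),Y(1:n)) is disassociated at (0, δⁿ) or associated at (1, δⁿ). Then the mutual information satisfies the superadditivity bound I_{δⁿ}(Y(1:n); X(1:n)) ≤ Σ_{i=1}^n I_δ(Y(i); X(i)); equivalently, |⟦Y(1:n)|X(1:n)⟧*_{δⁿ}| ≤ ∏_{i=1}^n |⟦Y(i)|X(i)⟧*_δ|. -/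

import Mathlib

open Set Real

namespace NSIT

variable {Ω 𝒳 𝒴 : Type*}

/-- The conditional range `⟦X|y⟧` of an uncertain variable `X` given that the
uncertain variable `Y` takes the value `y`. -/
def condRange (X : Ω → 𝒳) (Y : Ω → 𝒴) (y : 𝒴) : Set 𝒳 :=
  X '' {ω | Y ω = y}

/-- `m` is an uncertainty function: it vanishes on the empty set, is positive (and
finite, being real-valued) on nonempty sets, and is strongly transitive. -/
def IsUncertaintyFn (m : Set 𝒳 → ℝ) : Prop :=
  m ∅ = 0 ∧ (∀ S : Set 𝒳, S.Nonempty → 0 < m S) ∧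
    ∀ S₁ S₂ : Set 𝒳, max (m S₁) (m S₂) ≤ m (S₁ ∪ S₂)

/-- The set of association `𝒜(X;Y)`: all nonzero relative uncertainties of
intersections of two distinct conditional ranges of `X` given values of `Y`. -/
def assocSet (mX : Set 𝒳 → ℝ) (X : Ω → 𝒳) (Y : Ω → 𝒴) : Set ℝ :=
  {r | r ≠ 0 ∧ ∃ y₁ ∈ Set.range Y, ∃ y₂ ∈ Set.range Y, y₁ ≠ y₂ ∧
    r = mX (condRange X Y y₁ ∩ condRange X Y y₂) / mX (Set.range X)}

/-- `X` and `Y` are associated at levels `(δ₁, δ₂)`: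
`𝒜(X;Y) ⪯ δ₁` and `𝒜(Y;X) ⪯ δ₂` (vacuously true for empty association sets). -/
def Associated (mX : Set 𝒳 → ℝ) (mY : Set 𝒴 → ℝ) (X : Ω → 𝒳) (Y : Ω → 𝒴)
    (δ₁ δ₂ : ℝ) : Prop :=
  (∀ r ∈ assocSet mX X Y, r ≤ δ₁) ∧ ∀ r ∈ assocSet mY Y X, r ≤ δ₂

/-- `X` and `Y` are disassociated at levels `(δ₁, δ₂)`:
`𝒜(X;Y) ≻ δ₁` and `𝒜(Y;X) ≻ δ₂` (which in particular requires the association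
sets to be nonempty). -/
def Disassociated (mX : Set 𝒳 → ℝ) (mY : Set 𝒴 → ℝ) (X : Ω → 𝒳) (Y : Ω → 𝒴)
    (δ₁ δ₂ : ℝ) : Prop :=
  (assocSet mX X Y).Nonempty ∧ (∀ r ∈ assocSet mX X Y, δ₁ < r) ∧
    (assocSet mY Y X).Nonempty ∧ ∀ r ∈ assocSet mY Y X, δ₂ < r

/-- `x₁` and `x₂` are `δ`-connected via `⟦X|Y⟧`: there is a finite chain of
conditional ranges joining them whose consecutive intersections have relative
uncertainty greater than `δ`. -/
def Conn (mX : Set 𝒳 → ℝ) (X : Ω → 𝒳) (Y : Ω → 𝒴) (δ : ℝ) (x₁ x₂ : 𝒳) : Prop :=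
  ∃ (N : ℕ) (ys : Fin (N + 1) → 𝒴),
    x₁ ∈ condRange X Y (ys 0) ∧ x₂ ∈ condRange X Y (ys (Fin.last N)) ∧
    ∀ i : Fin N,
      δ < mX (condRange X Y (ys i.succ) ∩ condRange X Y (ys i.castSucc)) /
        mX (Set.range X)

/-- `F` is a `δ`-overlap family (for `X` given `Y`): it covers `⟦X⟧`, each member
is `δ`-connected and contains a singly `δ`-connected set of the form `⟦X|y⟧`,
any two distinct members overlap with uncertainty at most `δ · m(⟦X⟧)`, and every
conditional range `⟦X|y⟧` is contained in some member. -/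
def IsOverlapFamily (mX : Set 𝒳 → ℝ) (X : Ω → 𝒳) (Y : Ω → 𝒴) (δ : ℝ)
    (F : Set (Set 𝒳)) : Prop :=
  ⋃₀ F = Set.range X ∧
  (∀ S ∈ F, (∀ x₁ ∈ S, ∀ x₂ ∈ S, Conn mX X Y δ x₁ x₂) ∧
    ∃ y ∈ Set.range Y, condRange X Y y ⊆ S) ∧
  (∀ S₁ ∈ F, ∀ S₂ ∈ F, S₁ ≠ S₂ → mX (S₁ ∩ S₂) ≤ δ * mX (Set.range X)) ∧
  ∀ y ∈ Set.range Y, ∃ S ∈ F, condRange X Y y ⊆ S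


lemma umono {m : Set 𝒳 → ℝ} (hm : IsUncertaintyFn m) {A B : Set 𝒳} (h : A ⊆ B) :
    m A ≤ m B := by
  have h2 := hm.2.2 A B
  rw [Set.union_eq_self_of_subset_left h] at h2
  exact le_trans (le_max_left _ _) h2

lemma usum {α : Type*} {m : Set 𝒳 → ℝ} (h0 : m ∅ = 0)
    (hsub : ∀ A B : Set 𝒳, m (A ∪ B) ≤ m A + m B) (s : Finset α) (f : α → Set 𝒳) :
    m (⋃ a ∈ s, f a) ≤ ∑ a ∈ s, m (f a) := by
  classical
  refine Finset.induction_on s ?_ ?_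
  · simp [h0]
  · intro a s ha ih
    rw [Finset.set_biUnion_insert, Finset.sum_insert ha]
    exact le_trans (hsub _ _) (by linarith)

lemma condRange_nonempty {X : Ω → 𝒳} {Y : Ω → 𝒴} {y : 𝒴} (h : y ∈ Set.range Y) :
    (condRange X Y y).Nonempty := by
  obtain ⟨ω, rfl⟩ := h
  exact ⟨X ω, ω, rfl, rfl⟩

lemma mem_range_of_condRange_nonempty {X : Ω → 𝒳} {Y : Ω → 𝒴} {y : 𝒴}
    (h : (condRange X Y y).Nonempty) : y ∈ Set.range Y := by
  obtain ⟨x, ω, hω, rfl⟩ := h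
  exact ⟨ω, hω⟩

lemma pow_eq_one_imp {x : ℝ} {n : ℕ} (hn : n ≠ 0) (hx : 0 < x) (h : x ^ n = 1) : x = 1 := by
  rcases lt_trichotomy x 1 with h1 | h1 | h1
  · have := pow_lt_one₀ hx.le h1 hn; linarith
  · exact h1
  · have := one_lt_pow₀ h1 hn; linarith

/-- Theorem 5: under the product and union-bound assumptions, with
`0 ≤ δ < (min_{i,x(i)} m_𝒴(⟦Y(i)|x(i)⟧)) / (maxᵢ |⟦X(i)⟧|)` and either
disassociation at `(0, δⁿ)` or association at `(1, δⁿ)` of the joint variables,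
the mutual information is subadditive:
`I_{δⁿ}(Y(1:n);X(1:n)) ≤ Σᵢ I_δ(Y(i);X(i))`, equivalently
`|⟦Y(1:n)|X(1:n)⟧*_{δⁿ}| ≤ ∏ᵢ |⟦Y(i)|X(i)⟧*_δ|`. -/
theorem information_subadditive
    {Ω 𝒳 𝒴 : Type*} {n : ℕ}
    (m1 : Set 𝒴 → ℝ) (mn : Set (Fin n → 𝒴) → ℝ) (mXn : Set (Fin n → 𝒳) → ℝ)
    (hm1 : IsUncertaintyFn m1) (hmn : IsUncertaintyFn mn)
    (hmXn : IsUncertaintyFn mXn)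
    (hprod : ∀ S : Fin n → Set 𝒴, mn (Set.univ.pi S) = ∏ i, m1 (S i))
    (hmnuniv : mn Set.univ = 1)
    (hsub1 : ∀ S₁ S₂ : Set 𝒴, m1 (S₁ ∪ S₂) ≤ m1 S₁ + m1 S₂)
    (hsubn : ∀ S₁ S₂ : Set (Fin n → 𝒴), mn (S₁ ∪ S₂) ≤ mn S₁ + mn S₂)
    (Xv : Ω → Fin n → 𝒳) (Yv : Ω → Fin n → 𝒴) (δ : ℝ)
    (hX : Set.range Xv = Set.univ.pi fun i => Set.range fun ω => Xv ω i)
    (hY : ∀ xv ∈ Set.range Xv,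
      condRange Yv Xv xv =
        Set.univ.pi fun i =>
          condRange (fun ω => Yv ω i) (fun ω => Xv ω i) (xv i))
    (hXfin : ∀ i, (Set.range fun ω => Xv ω i).Finite)
    (hδ0 : 0 ≤ δ)
    (hδ : δ < sInf {r | ∃ i : Fin n, ∃ x ∈ Set.range fun ω => Xv ω i,
        r = m1 (condRange (fun ω => Yv ω i) (fun ω => Xv ω i) x)} /
      ((Finset.univ.sup fun i : Fin n =>
        (Set.range fun ω => Xv ω i).ncard : ℕ) : ℝ))
    (hdich : Disassociated mXn mn Xv Yv 0 (δ ^ n) ∨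
      Associated mXn mn Xv Yv 1 (δ ^ n))
    (Fn : Set (Set (Fin n → 𝒴))) (hFn : IsOverlapFamily mn Yv Xv (δ ^ n) Fn)
    (hFnfin : Fn.Finite)
    (F : Fin n → Set (Set 𝒴))
    (hF : ∀ i, IsOverlapFamily m1 (fun ω => Yv ω i) (fun ω => Xv ω i) δ (F i))
    (hFfin : ∀ i, (F i).Finite) :
    Fn.ncard ≤ ∏ i, (F i).ncard ∧
    Real.logb 2 (Fn.ncard : ℝ) ≤ ∑ i, Real.logb 2 ((F i).ncard : ℝ) := by
  classical
  -- First the cardinality bound; the log bound follows from it.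
  have key : Fn.ncard ≤ ∏ i, (F i).ncard := by
    rcases eq_or_ne n 0 with hn0 | hn0
    · -- n = 0 : the target type is a subsingleton
      subst hn0
      have hsub : ∀ S ∈ Fn, ∀ S' ∈ Fn, S = S' := by
        intro S hS S' hS'
        obtain ⟨y, hy, hyS⟩ := (hFn.2.1 S hS).2
        obtain ⟨y', hy', hyS'⟩ := (hFn.2.1 S' hS').2
        have hSne : S.Nonempty := (condRange_nonempty hy).mono hyS
        have hS'ne : S'.Nonempty := (condRange_nonempty hy').mono hyS'
        have hall : ∀ t u : Fin 0 → 𝒴, t = u := fun t u => funext fun j => j.elim0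
        obtain ⟨s, hs⟩ := hSne
        obtain ⟨s', hs'⟩ := hS'ne
        ext t
        constructor
        · intro _; rwa [hall t s']
        · intro _; rwa [hall t s]
      have h1 : Fn.ncard ≤ 1 := (Set.ncard_le_one hFnfin).mpr hsub
      simpa using h1
    by_cases hΩ : Nonempty Ω
    swap
    · -- Ω empty : Fn is empty
      have hFe : Fn = ∅ := by
        by_contra h
        obtain ⟨S, hS⟩ := Set.nonempty_iff_ne_empty.mpr h
        obtain ⟨y, ⟨ω, -⟩, -⟩ := (hFn.2.1 S hS).2
        exact hΩ ⟨ω⟩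
      simp [hFe]
    obtain ⟨ω₀⟩ := hΩ
    have i₀ : Fin n := ⟨0, Nat.pos_of_ne_zero hn0⟩
    -- basic nonemptiness facts
    have hXirne : ∀ i : Fin n, (Set.range fun ω => Xv ω i).Nonempty :=
      fun i => ⟨Xv ω₀ i, ω₀, rfl⟩
    have hYpos : ∀ i : Fin n, 0 < m1 (Set.range fun ω => Yv ω i) :=
      fun i => hm1.2.1 _ ⟨Yv ω₀ i, ω₀, rfl⟩
    have hmnYpos : 0 < mn (Set.range Yv) := hmn.2.1 _ ⟨Yv ω₀, ω₀, rfl⟩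
    -- m1 univ = 1
    have hm1univ : m1 (Set.univ : Set 𝒴) = 1 := by
      have h := hprod fun _ => (Set.univ : Set 𝒴)
      rw [Set.pi_univ, hmnuniv] at h
      have h' : m1 (Set.univ : Set 𝒴) ^ n = 1 := by
        rw [Finset.prod_const, Finset.card_univ, Fintype.card_fin] at h
        exact h.symm
      exact pow_eq_one_imp hn0 (hm1.2.1 _ ⟨Yv ω₀ i₀, Set.mem_univ _⟩) h'
    have hm1le1 : ∀ S : Set 𝒴, m1 S ≤ 1 :=
      fun S => hm1univ ▸ umono hm1 (Set.subset_univ S)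
    -- μ and K
    set μ : ℝ := sInf {r | ∃ i : Fin n, ∃ x ∈ Set.range fun ω => Xv ω i,
        r = m1 (condRange (fun ω => Yv ω i) (fun ω => Xv ω i) x)} with hμdef
    set K : ℕ := Finset.univ.sup fun i : Fin n => (Set.range fun ω => Xv ω i).ncard
      with hKdef
    have hKpos : 0 < K := by
      have h1 : 0 < (Set.range fun ω => Xv ω i₀).ncard :=
        (Set.ncard_pos (hXfin i₀)).mpr (hXirne i₀)
      have h2 := Finset.le_sup (f := fun i : Fin n => (Set.range fun ω => Xv ω i).ncard)
        (Finset.mem_univ i₀)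
      rw [← hKdef] at h2
      exact lt_of_lt_of_le h1 h2
    have hKR : (0 : ℝ) < (K : ℝ) := by exact_mod_cast hKpos
    have hμle : ∀ i : Fin n, ∀ x ∈ Set.range fun ω => Xv ω i,
        μ ≤ m1 (condRange (fun ω => Yv ω i) (fun ω => Xv ω i) x) := by
      intro i x hx
      refine csInf_le ⟨0, ?_⟩ ⟨i, x, hx, rfl⟩
      rintro r ⟨j, z, hz, rfl⟩
      exact (hm1.2.1 _ (condRange_nonempty hz)).le
    have hδK : δ * (K : ℝ) < μ := (lt_div_iff₀ hKR).mp hδ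
    have hμpos : 0 < μ := lt_of_le_of_lt (mul_nonneg hδ0 hKR.le) hδK
    -- m1 of marginal ranges is at most K
    have hYK : ∀ i : Fin n, m1 (Set.range fun ω => Yv ω i) ≤ (K : ℝ) := by
      intro i
      have heq : (Set.range fun ω => Yv ω i) =
          ⋃ x ∈ (hXfin i).toFinset,
            condRange (fun ω => Yv ω i) (fun ω => Xv ω i) x := by
        ext y
        constructor
        · rintro ⟨ω, rfl⟩
          exact Set.mem_biUnion ((hXfin i).mem_toFinset.mpr ⟨ω, rfl⟩) ⟨ω, rfl, rfl⟩
        · rintro hy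
          obtain ⟨x, -, ω, -, rfl⟩ := Set.mem_iUnion₂.mp hy
          exact ⟨ω, rfl⟩
      rw [heq]
      refine le_trans (usum hm1.1 hsub1 _ _) ?_
      calc ∑ x ∈ (hXfin i).toFinset,
            m1 (condRange (fun ω => Yv ω i) (fun ω => Xv ω i) x)
          ≤ ∑ _x ∈ (hXfin i).toFinset, (1 : ℝ) :=
            Finset.sum_le_sum fun x _ => hm1le1 _
        _ = ((hXfin i).toFinset.card : ℝ) := by simp
        _ ≤ (K : ℝ) := by
            have h2 := Finset.le_sup (f := fun i : Fin n => (Set.range fun ω => Xv ω i).ncard)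
              (Finset.mem_univ i)
            have h2' : (Set.range fun ω => Xv ω i).ncard ≤ K := h2
            rw [Set.ncard_eq_toFinset_card _ (hXfin i)] at h2'
            exact_mod_cast h2' 
    -- key per-coordinate lower bound
    have hkey6 : ∀ i : Fin n, ∀ x ∈ Set.range fun ω => Xv ω i,
        δ * m1 (Set.range fun ω => Yv ω i) <
          m1 (condRange (fun ω => Yv ω i) (fun ω => Xv ω i) x) := by
      intro i x hx
      calc δ * m1 (Set.range fun ω => Yv ω i) ≤ δ * (K : ℝ) :=
            mul_le_mul_of_nonneg_left (hYK i) hδ0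
        _ < μ := hδK
        _ ≤ _ := hμle i x hx
    -- joint range bounded by product of marginal ranges
    have hmnY : mn (Set.range Yv) ≤ ∏ i, m1 (Set.range fun ω => Yv ω i) := by
      have hsubset : Set.range Yv ⊆
          Set.univ.pi fun i => Set.range fun ω => Yv ω i := by
        rintro _ ⟨ω, rfl⟩ i -
        exact ⟨ω, rfl⟩
      exact le_trans (umono hmn hsubset) (le_of_eq (hprod _))
    have hmnY1 : mn (Set.range Yv) ≤ 1 :=
      hmnuniv ▸ umono hmn (Set.subset_univ _)
    -- the product lower bound lemma
    have prod_gt : ∀ f : Fin n → ℝ,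
        (∀ j, δ * m1 (Set.range fun ω => Yv ω j) < f j) →
        δ ^ n * mn (Set.range Yv) < ∏ j, f j := by
      intro f hf
      have hfpos : ∀ j, 0 < f j :=
        fun j => lt_of_le_of_lt (mul_nonneg hδ0 (hYpos j).le) (hf j)
      rcases eq_or_lt_of_le hδ0 with hδe | hδpos
      · rw [← hδe, zero_pow hn0, zero_mul]
        exact Finset.prod_pos fun j _ => hfpos j
      · have h1 : δ ^ n * mn (Set.range Yv) ≤
            δ ^ n * ∏ j, m1 (Set.range fun ω => Yv ω j) :=
          mul_le_mul_of_nonneg_left hmnY (pow_nonneg hδ0 n)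
        have h2 : δ ^ n * ∏ j, m1 (Set.range fun ω => Yv ω j) =
            ∏ j : Fin n, (δ * m1 (Set.range fun ω => Yv ω j)) := by
          rw [Finset.prod_mul_distrib, Finset.prod_const, Finset.card_univ,
            Fintype.card_fin]
        have h3 : ∏ j : Fin n, (δ * m1 (Set.range fun ω => Yv ω j)) < ∏ j, f j := by
          refine Finset.prod_lt_prod_of_nonempty
            (fun j _ => mul_pos hδpos (hYpos j)) (fun j _ => hf j) ?_
          exact Finset.univ_nonempty_iff.mpr ⟨i₀⟩
        linarith
    -- coordinates of range elements
    have hxiran : ∀ xv ∈ Set.range Xv, ∀ i : Fin n,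
        xv i ∈ Set.range fun ω => Xv ω i := by
      intro xv hxv i
      rw [hX] at hxv
      exact hxv i (Set.mem_univ i)
    have hmemX : ∀ v : Fin n → 𝒳, (∀ i, v i ∈ Set.range fun ω => Xv ω i) →
        v ∈ Set.range Xv := by
      intro v hv
      rw [hX]
      exact fun i _ => hv i
    have hmnC : ∀ xv ∈ Set.range Xv, mn (condRange Yv Xv xv) =
        ∏ i, m1 (condRange (fun ω => Yv ω i) (fun ω => Xv ω i) (xv i)) := by
      intro xv hxv
      rw [hY xv hxv, hprod]
    have fact8 : ∀ xv ∈ Set.range Xv,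
        δ ^ n * mn (Set.range Yv) < mn (condRange Yv Xv xv) := by
      intro xv hxv
      rw [hmnC xv hxv]
      exact prod_gt _ fun j => hkey6 j _ (hxiran xv hxv j)
    -- uniqueness of the member containing a "large" set
    have uniq : ∀ S ∈ Fn, ∀ S' ∈ Fn, ∀ R : Set (Fin n → 𝒴),
        δ ^ n * mn (Set.range Yv) < mn R → R ⊆ S → R ⊆ S' → S = S' := by
      intro S hS S' hS' R hR hRS hRS'
      by_contra hne
      have h := hFn.2.2.1 S hS S' hS' hne
      have h2 : mn R ≤ mn (S ∩ S') := umono hmn (Set.subset_inter hRS hRS')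
      linarith
    -- THE KEY INJECTIVITY FACT
    have hinj : ∀ S ∈ Fn, ∀ S' ∈ Fn, ∀ xv ∈ Set.range Xv, ∀ xv' ∈ Set.range Xv,
        condRange Yv Xv xv ⊆ S → condRange Yv Xv xv' ⊆ S' →
        (∀ i : Fin n, ∃ T ∈ F i,
          condRange (fun ω => Yv ω i) (fun ω => Xv ω i) (xv i) ⊆ T ∧
          condRange (fun ω => Yv ω i) (fun ω => Xv ω i) (xv' i) ⊆ T) →
        S = S' := by
      rcases hdich with hD | hA
      · -- Disassociated case
        intro S hS S' hS' xv hxv xv' hxv' hCnS hCnS' hTT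
        have hlink : ∀ a ∈ Set.range Xv, ∀ b ∈ Set.range Xv,
            (condRange Yv Xv a ∩ condRange Yv Xv b).Nonempty → a ≠ b →
            δ ^ n * mn (Set.range Yv) <
              mn (condRange Yv Xv a ∩ condRange Yv Xv b) := by
          intro a ha b hb hne hab
          have hpos : 0 < mn (condRange Yv Xv a ∩ condRange Yv Xv b) := hmn.2.1 _ hne
          have hr := hD.2.2.2 _ ⟨ne_of_gt (div_pos hpos hmnYpos), a, ha, b, hb, hab, rfl⟩
          exact (lt_div_iff₀ hmnYpos).mp hr
        have sm_link : ∀ a ∈ Set.range Xv, ∀ b ∈ Set.range Xv,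
            (condRange Yv Xv a ∩ condRange Yv Xv b).Nonempty →
            ∀ U ∈ Fn, condRange Yv Xv a ⊆ U →
            ∀ U' ∈ Fn, condRange Yv Xv b ⊆ U' → U = U' := by
          intro a ha b hb hne U hU hUa U' hU' hU'b
          rcases eq_or_ne a b with rfl | hab
          · exact uniq U hU U' hU' _ (fact8 a ha) hUa hU'b
          · exact uniq U hU U' hU' _ (hlink a ha b hb hne hab)
              (Set.inter_subset_left.trans hUa) (Set.inter_subset_right.trans hU'b)
        have sm_trans : ∀ a b c : Fin n → 𝒳, b ∈ Set.range Xv →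
            (∀ U ∈ Fn, condRange Yv Xv a ⊆ U →
              ∀ U' ∈ Fn, condRange Yv Xv b ⊆ U' → U = U') →
            (∀ U ∈ Fn, condRange Yv Xv b ⊆ U →
              ∀ U' ∈ Fn, condRange Yv Xv c ⊆ U' → U = U') →
            (∀ U ∈ Fn, condRange Yv Xv a ⊆ U →
              ∀ U' ∈ Fn, condRange Yv Xv c ⊆ U' → U = U') := by
          intro a b c hb h1 h2 U hU hUa U' hU' hU'c
          obtain ⟨V, hV, hVb⟩ := hFn.2.2.2 b hb
          rw [h1 U hU hUa V hV hVb]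
          exact h2 V hV hVb U' hU' hU'c
        obtain ⟨yv, hyv⟩ := condRange_nonempty (X := Yv) hxv
        obtain ⟨wv, hwv⟩ := condRange_nonempty (X := Yv) hxv'
        have hyvi : ∀ i : Fin n,
            yv i ∈ condRange (fun ω => Yv ω i) (fun ω => Xv ω i) (xv i) := by
          intro i
          have h := hyv
          rw [hY xv hxv] at h
          exact h i (Set.mem_univ i)
        have hwvi : ∀ i : Fin n,
            wv i ∈ condRange (fun ω => Yv ω i) (fun ω => Xv ω i) (xv' i) := by
          intro i
          have h := hwv
          rw [hY xv' hxv'] at h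
          exact h i (Set.mem_univ i)
        have main : ∀ k : ℕ, k ≤ n → ∃ v : Fin n → 𝒳, v ∈ Set.range Xv ∧
            (∀ U ∈ Fn, condRange Yv Xv xv ⊆ U →
              ∀ U' ∈ Fn, condRange Yv Xv v ⊆ U' → U = U') ∧
            (∀ j : Fin n, j.val < k →
              wv j ∈ condRange (fun ω => Yv ω j) (fun ω => Xv ω j) (v j)) ∧
            (∀ j : Fin n, k ≤ j.val → v j = xv j) := by
          intro k
          induction k with
          | zero =>
            intro _
            exact ⟨xv, hxv, sm_link xv hxv xv hxv ⟨yv, hyv, hyv⟩,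
              fun j h => absurd h (Nat.not_lt_zero _), fun j _ => rfl⟩
          | succ k ih =>
            intro hk1
            obtain ⟨v, hv, hsm, hw, hfix⟩ := ih (Nat.le_of_succ_le hk1)
            have hkn : k < n := hk1
            have hvi : v ⟨k, hkn⟩ = xv ⟨k, hkn⟩ := hfix ⟨k, hkn⟩ (le_refl k)
            obtain ⟨T, hT, hT1, hT2⟩ := hTT ⟨k, hkn⟩
            have hy1T : yv ⟨k, hkn⟩ ∈ T := hT1 (hyvi ⟨k, hkn⟩)
            have hy2T : wv ⟨k, hkn⟩ ∈ T := hT2 (hwvi ⟨k, hkn⟩)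
            obtain ⟨N, ys, hy₁, hy₂, hstep⟩ :=
              ((hF ⟨k, hkn⟩).2.1 T hT).1 (yv ⟨k, hkn⟩) hy1T (wv ⟨k, hkn⟩) hy2T
            have hupmem : ∀ x : 𝒳, (x ∈ Set.range fun ω => Xv ω ⟨k, hkn⟩) →
                Function.update v ⟨k, hkn⟩ x ∈ Set.range Xv := by
              intro x hx
              refine hmemX _ fun j => ?_
              rcases eq_or_ne j ⟨k, hkn⟩ with rfl | hj
              · rwa [Function.update_self]
              · rw [Function.update_of_ne hj]
                exact hxiran v hv j
            have hinter : ∀ x₁ x₂ : 𝒳, (x₁ ∈ Set.range fun ω => Xv ω ⟨k, hkn⟩) →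
                (x₂ ∈ Set.range fun ω => Xv ω ⟨k, hkn⟩) →
                (condRange (fun ω => Yv ω ⟨k, hkn⟩) (fun ω => Xv ω ⟨k, hkn⟩) x₁ ∩
                  condRange (fun ω => Yv ω ⟨k, hkn⟩) (fun ω => Xv ω ⟨k, hkn⟩) x₂).Nonempty →
                (condRange Yv Xv (Function.update v ⟨k, hkn⟩ x₁) ∩
                  condRange Yv Xv (Function.update v ⟨k, hkn⟩ x₂)).Nonempty := by
              intro x₁ x₂ hx₁ hx₂ hne
              rw [hY _ (hupmem x₁ hx₁), hY _ (hupmem x₂ hx₂), ← Set.pi_inter_distrib,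
                Set.univ_pi_nonempty_iff]
              intro j
              rcases eq_or_ne j ⟨k, hkn⟩ with rfl | hj
              · rw [Function.update_self, Function.update_self]
                exact hne
              · rw [Function.update_of_ne hj, Function.update_of_ne hj, Set.inter_self]
                exact condRange_nonempty (hxiran v hv j)
            have inner : ∀ m : ℕ, ∀ hm : m < N + 1,
                ((ys ⟨m, hm⟩) ∈ Set.range fun ω => Xv ω ⟨k, hkn⟩) ∧
                (∀ U ∈ Fn, condRange Yv Xv xv ⊆ U → ∀ U' ∈ Fn,
                  condRange Yv Xv (Function.update v ⟨k, hkn⟩ (ys ⟨m, hm⟩)) ⊆ U' →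
                  U = U') := by
              intro m
              induction m with
              | zero =>
                intro hm
                have h0 : (⟨0, hm⟩ : Fin (N + 1)) = 0 := Fin.ext (by simp)
                rw [h0]
                have h0r : (ys 0) ∈ Set.range fun ω => Xv ω ⟨k, hkn⟩ :=
                  mem_range_of_condRange_nonempty ⟨yv ⟨k, hkn⟩, hy₁⟩
                refine ⟨h0r, ?_⟩
                refine sm_trans xv v _ hv hsm ?_
                refine sm_link v hv _ (hupmem _ h0r) ?_
                have h2 := hinter (v ⟨k, hkn⟩) (ys 0) (hxiran v hv ⟨k, hkn⟩) h0r
                  ⟨yv ⟨k, hkn⟩, by rw [hvi]; exact hyvi ⟨k, hkn⟩, hy₁⟩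
                rwa [Function.update_eq_self] at h2
              | succ m ihm =>
                intro hm
                have hm' : m < N + 1 := Nat.lt_of_succ_lt hm
                obtain ⟨hr_m, hsm_m⟩ := ihm hm'
                have hMN : m < N := Nat.lt_of_succ_lt_succ hm
                have hs : δ * m1 (Set.range fun ω => Yv ω ⟨k, hkn⟩) <
                    m1 (condRange (fun ω => Yv ω ⟨k, hkn⟩) (fun ω => Xv ω ⟨k, hkn⟩)
                          (ys ⟨m + 1, hm⟩) ∩
                        condRange (fun ω => Yv ω ⟨k, hkn⟩) (fun ω => Xv ω ⟨k, hkn⟩)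
                          (ys ⟨m, hm'⟩)) :=
                  (lt_div_iff₀ (hYpos ⟨k, hkn⟩)).mp (hstep ⟨m, hMN⟩)
                have hIne : (condRange (fun ω => Yv ω ⟨k, hkn⟩) (fun ω => Xv ω ⟨k, hkn⟩)
                      (ys ⟨m + 1, hm⟩) ∩
                    condRange (fun ω => Yv ω ⟨k, hkn⟩) (fun ω => Xv ω ⟨k, hkn⟩)
                      (ys ⟨m, hm'⟩)).Nonempty := by
                  rw [Set.nonempty_iff_ne_empty]
                  intro he
                  rw [he, hm1.1] at hs
                  have := mul_nonneg hδ0 (hYpos ⟨k, hkn⟩).le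
                  linarith
                obtain ⟨z, hz1, hz2⟩ := hIne
                have hrm1 : ys ⟨m + 1, hm⟩ ∈ Set.range fun ω => Xv ω ⟨k, hkn⟩ :=
                  mem_range_of_condRange_nonempty ⟨z, hz1⟩
                refine ⟨hrm1, ?_⟩
                refine sm_trans xv (Function.update v ⟨k, hkn⟩ (ys ⟨m, hm'⟩)) _
                  (hupmem _ hr_m) hsm_m ?_
                exact sm_link _ (hupmem _ hr_m) _ (hupmem _ hrm1)
                  (hinter _ _ hr_m hrm1 ⟨z, hz2, hz1⟩)
            obtain ⟨hrN, hsmN⟩ := inner N (Nat.lt_succ_self N)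
            refine ⟨Function.update v ⟨k, hkn⟩ (ys ⟨N, Nat.lt_succ_self N⟩),
              hupmem _ hrN, hsmN, ?_, ?_⟩
            · intro j hj
              rcases eq_or_ne j ⟨k, hkn⟩ with rfl | hj'
              · rw [Function.update_self]
                have hlast : (⟨N, Nat.lt_succ_self N⟩ : Fin (N + 1)) = Fin.last N := rfl
                rw [hlast]
                exact hy₂
              · rw [Function.update_of_ne hj']
                refine hw j ?_
                have hj2 : j.val ≤ k := Nat.lt_succ_iff.mp hj
                rcases lt_or_eq_of_le hj2 with h | h
                · exact h
                · exact absurd (Fin.ext h) hj'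
            · intro j hj
              have hj' : j ≠ ⟨k, hkn⟩ := by
                intro he
                rw [he] at hj
                simp at hj
              rw [Function.update_of_ne hj']
              exact hfix j (Nat.le_of_succ_le hj)
        obtain ⟨v, hvr, hsm, hw, -⟩ := main n (le_refl n)
        have hwvv : wv ∈ condRange Yv Xv v := by
          rw [hY v hvr]
          intro j _
          exact hw j j.isLt
        exact sm_trans xv v xv' hvr hsm (sm_link v hvr xv' hxv' ⟨wv, hwvv, hwv⟩)
          S hS hCnS S' hS' hCnS'
      · -- Associated case
        intro S hS S' hS' xv hxv xv' hxv' hCnS hCnS' hTT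
        have hover : ∀ a ∈ Set.range Xv, ∀ b ∈ Set.range Xv, a ≠ b →
            mn (condRange Yv Xv a ∩ condRange Yv Xv b) ≤
              δ ^ n * mn (Set.range Yv) := by
          intro a ha b hb hab
          by_cases hr : mn (condRange Yv Xv a ∩ condRange Yv Xv b) /
              mn (Set.range Yv) = 0
          · have h0 : mn (condRange Yv Xv a ∩ condRange Yv Xv b) = 0 :=
              (div_eq_zero_iff.mp hr).resolve_right (ne_of_gt hmnYpos)
            rw [h0]
            exact mul_nonneg (pow_nonneg hδ0 n) hmnYpos.le
          · have h := hA.2 _ ⟨hr, a, ha, b, hb, hab, rfl⟩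
            calc mn (condRange Yv Xv a ∩ condRange Yv Xv b)
                = (mn (condRange Yv Xv a ∩ condRange Yv Xv b) / mn (Set.range Yv)) *
                    mn (Set.range Yv) := (div_mul_cancel₀ _ (ne_of_gt hmnYpos)).symm
              _ ≤ δ ^ n * mn (Set.range Yv) :=
                  mul_le_mul_of_nonneg_right h hmnYpos.le
        have htriv : ∀ i : Fin n, ∀ T ∈ F i, ∀ y₁ ∈ T, ∀ y₂ ∈ T,
            ∃ c ∈ Set.range fun ω => Xv ω i,
              y₁ ∈ condRange (fun ω => Yv ω i) (fun ω => Xv ω i) c ∧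
              y₂ ∈ condRange (fun ω => Yv ω i) (fun ω => Xv ω i) c := by
          intro i T hT y₁ h₁ y₂ h₂
          obtain ⟨N, ys, hy₁, hy₂, hstep⟩ := ((hF i).2.1 T hT).1 y₁ h₁ y₂ h₂
          have hconst : ∀ m : ℕ, ∀ hm : m < N + 1, ys ⟨m, hm⟩ = ys 0 := by
            intro m
            induction m with
            | zero =>
              intro hm
              have h0 : (⟨0, hm⟩ : Fin (N + 1)) = 0 := Fin.ext (by simp)
              rw [h0]
            | succ m ihm =>
              intro hm
              have hm' : m < N + 1 := Nat.lt_of_succ_lt hm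
              have hMN : m < N := Nat.lt_of_succ_lt_succ hm
              have hs : δ * m1 (Set.range fun ω => Yv ω i) <
                  m1 (condRange (fun ω => Yv ω i) (fun ω => Xv ω i) (ys ⟨m + 1, hm⟩) ∩
                      condRange (fun ω => Yv ω i) (fun ω => Xv ω i) (ys ⟨m, hm'⟩)) :=
                (lt_div_iff₀ (hYpos i)).mp (hstep ⟨m, hMN⟩)
              rcases eq_or_ne (ys ⟨m + 1, hm⟩) (ys ⟨m, hm'⟩) with he | hne
              · rw [he]
                exact ihm hm'
              · exfalso
                have hIne : (condRange (fun ω => Yv ω i) (fun ω => Xv ω i)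
                      (ys ⟨m + 1, hm⟩) ∩
                    condRange (fun ω => Yv ω i) (fun ω => Xv ω i)
                      (ys ⟨m, hm'⟩)).Nonempty := by
                  rw [Set.nonempty_iff_ne_empty]
                  intro he2
                  rw [he2, hm1.1] at hs
                  have := mul_nonneg hδ0 (hYpos i).le
                  linarith
                obtain ⟨z, hz1, hz2⟩ := hIne
                have hr1 : ys ⟨m + 1, hm⟩ ∈ Set.range fun ω => Xv ω i :=
                  mem_range_of_condRange_nonempty ⟨z, hz1⟩
                have hr2 : ys ⟨m, hm'⟩ ∈ Set.range fun ω => Xv ω i :=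
                  mem_range_of_condRange_nonempty ⟨z, hz2⟩
                have hamem : ∀ x : 𝒳, (x ∈ Set.range fun ω => Xv ω i) →
                    Function.update (Xv ω₀) i x ∈ Set.range Xv := by
                  intro x hx
                  refine hmemX _ fun j => ?_
                  rcases eq_or_ne j i with rfl | hj
                  · rwa [Function.update_self]
                  · rw [Function.update_of_ne hj]
                    exact ⟨ω₀, rfl⟩
                have ha := hamem _ hr1
                have hb := hamem _ hr2
                have hab : Function.update (Xv ω₀) i (ys ⟨m + 1, hm⟩) ≠
                    Function.update (Xv ω₀) i (ys ⟨m, hm'⟩) := by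
                  intro he2
                  have := congrFun he2 i
                  rw [Function.update_self, Function.update_self] at this
                  exact hne this
                have hbig : δ ^ n * mn (Set.range Yv) <
                    mn (condRange Yv Xv (Function.update (Xv ω₀) i (ys ⟨m + 1, hm⟩)) ∩
                        condRange Yv Xv (Function.update (Xv ω₀) i (ys ⟨m, hm'⟩))) := by
                  rw [hY _ ha, hY _ hb, ← Set.pi_inter_distrib, hprod]
                  refine prod_gt _ fun j => ?_
                  rcases eq_or_ne j i with rfl | hj
                  · rw [Function.update_self, Function.update_self]
                    exact hs
                  · rw [Function.update_of_ne hj, Function.update_of_ne hj,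
                      Set.inter_self]
                    exact hkey6 j _ ⟨ω₀, rfl⟩
                exact absurd (hover _ ha _ hb hab) (not_le.mpr hbig)
          have hc0 : ys 0 ∈ Set.range fun ω => Xv ω i :=
            mem_range_of_condRange_nonempty ⟨y₁, hy₁⟩
          refine ⟨ys 0, hc0, hy₁, ?_⟩
          have hlast : ys (Fin.last N) = ys 0 := hconst N (Nat.lt_succ_self N)
          rwa [hlast] at hy₂
        have hsubC : condRange Yv Xv xv' ⊆ condRange Yv Xv xv := by
          intro wv hwv
          by_contra hwx
          have hcover : condRange Yv Xv xv ⊆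
              ⋃ c ∈ (Fintype.piFinset fun i => (hXfin i).toFinset).filter
                (fun c => wv ∈ condRange Yv Xv c ∧ c ≠ xv),
                (condRange Yv Xv xv ∩ condRange Yv Xv c) := by
            intro yv hyv
            have hcoord : ∀ i : Fin n, ∃ c ∈ Set.range fun ω => Xv ω i,
                yv i ∈ condRange (fun ω => Yv ω i) (fun ω => Xv ω i) c ∧
                wv i ∈ condRange (fun ω => Yv ω i) (fun ω => Xv ω i) c := by
              intro i
              obtain ⟨T, hT, hT1, hT2⟩ := hTT i
              have h1 : yv i ∈ T := by
                refine hT1 ?_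
                have h := hyv
                rw [hY xv hxv] at h
                exact h i (Set.mem_univ i)
              have h2 : wv i ∈ T := by
                refine hT2 ?_
                have h := hwv
                rw [hY xv' hxv'] at h
                exact h i (Set.mem_univ i)
              exact htriv i T hT _ h1 _ h2
            choose c hc1 hc2 hc3 using hcoord
            have hcX : c ∈ Set.range Xv := hmemX c hc1
            have hyc : yv ∈ condRange Yv Xv c := by
              rw [hY c hcX]
              intro j _
              exact hc2 j
            have hwc : wv ∈ condRange Yv Xv c := by
              rw [hY c hcX]
              intro j _
              exact hc3 j
            refine Set.mem_iUnion₂.mpr ⟨c, ?_, hyv, hyc⟩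
            rw [Finset.mem_filter]
            refine ⟨Fintype.mem_piFinset.mpr fun j => (hXfin j).mem_toFinset.mpr (hc1 j),
              hwc, fun he => hwx (he ▸ hwc)⟩
          have h1 : mn (condRange Yv Xv xv) ≤
              ∑ c ∈ (Fintype.piFinset fun i => (hXfin i).toFinset).filter
                (fun c => wv ∈ condRange Yv Xv c ∧ c ≠ xv),
                mn (condRange Yv Xv xv ∩ condRange Yv Xv c) :=
            le_trans (umono hmn hcover) (usum hmn.1 hsubn _ _)
          have h2 : ∑ c ∈ (Fintype.piFinset fun i => (hXfin i).toFinset).filter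
                (fun c => wv ∈ condRange Yv Xv c ∧ c ≠ xv),
                mn (condRange Yv Xv xv ∩ condRange Yv Xv c) ≤
              (((Fintype.piFinset fun i => (hXfin i).toFinset).filter
                (fun c => wv ∈ condRange Yv Xv c ∧ c ≠ xv)).card : ℝ) *
                (δ ^ n * mn (Set.range Yv)) := by
            have hterm : ∀ c ∈ (Fintype.piFinset fun i => (hXfin i).toFinset).filter
                (fun c => wv ∈ condRange Yv Xv c ∧ c ≠ xv),
                mn (condRange Yv Xv xv ∩ condRange Yv Xv c) ≤ δ ^ n * mn (Set.range Yv) := by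
              intro c hc
              obtain ⟨hcm, hwvc, hcne⟩ := Finset.mem_filter.mp hc
              have hcX : c ∈ Set.range Xv :=
                hmemX c fun j => (hXfin j).mem_toFinset.mp (Fintype.mem_piFinset.mp hcm j)
              exact hover xv hxv c hcX (Ne.symm hcne)
            refine le_trans (Finset.sum_le_sum hterm) ?_
            rw [Finset.sum_const, nsmul_eq_mul]
          have hcards : (((Fintype.piFinset fun i => (hXfin i).toFinset).filter
                (fun c => wv ∈ condRange Yv Xv c ∧ c ≠ xv)).card : ℝ) ≤ (K : ℝ) ^ n := by
            have h3 := Finset.card_filter_le (Fintype.piFinset fun i => (hXfin i).toFinset)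
              (fun c => wv ∈ condRange Yv Xv c ∧ c ≠ xv)
            have h4 : (Fintype.piFinset fun i => (hXfin i).toFinset).card =
                ∏ i, (hXfin i).toFinset.card := Fintype.card_piFinset _
            have h5 : ∀ i : Fin n, (hXfin i).toFinset.card ≤ K := by
              intro i
              have h6 := Finset.le_sup
                (f := fun i : Fin n => (Set.range fun ω => Xv ω i).ncard)
                (Finset.mem_univ i)
              have h6' : (Set.range fun ω => Xv ω i).ncard ≤ K := h6
              rwa [Set.ncard_eq_toFinset_card _ (hXfin i)] at h6'
            calc (((Fintype.piFinset fun i => (hXfin i).toFinset).filter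
                    (fun c => wv ∈ condRange Yv Xv c ∧ c ≠ xv)).card : ℝ)
                ≤ ((Fintype.piFinset fun i => (hXfin i).toFinset).card : ℝ) := by
                  exact_mod_cast h3
              _ = ∏ i, ((hXfin i).toFinset.card : ℝ) := by rw [h4]; push_cast; rfl
              _ ≤ ∏ _i : Fin n, (K : ℝ) :=
                  Finset.prod_le_prod (fun i _ => by positivity)
                    (fun i _ => by exact_mod_cast h5 i)
              _ = (K : ℝ) ^ n := by
                  rw [Finset.prod_const, Finset.card_univ, Fintype.card_fin]
          have hμn : μ ^ n ≤ mn (condRange Yv Xv xv) := by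
            rw [hmnC xv hxv]
            calc μ ^ n = ∏ _i : Fin n, μ := by
                  rw [Finset.prod_const, Finset.card_univ, Fintype.card_fin]
              _ ≤ _ := Finset.prod_le_prod (fun i _ => hμpos.le)
                  (fun i _ => hμle i _ (hxiran xv hxv i))
          have hfinal : mn (condRange Yv Xv xv) < mn (condRange Yv Xv xv) := by
            calc mn (condRange Yv Xv xv)
                ≤ ∑ c ∈ (Fintype.piFinset fun i => (hXfin i).toFinset).filter
                    (fun c => wv ∈ condRange Yv Xv c ∧ c ≠ xv),
                    mn (condRange Yv Xv xv ∩ condRange Yv Xv c) := h1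
              _ ≤ (((Fintype.piFinset fun i => (hXfin i).toFinset).filter
                    (fun c => wv ∈ condRange Yv Xv c ∧ c ≠ xv)).card : ℝ) *
                    (δ ^ n * mn (Set.range Yv)) := h2
              _ ≤ (K : ℝ) ^ n * (δ ^ n * mn (Set.range Yv)) :=
                  mul_le_mul_of_nonneg_right hcards
                    (mul_nonneg (pow_nonneg hδ0 n) hmnYpos.le)
              _ = (δ * (K : ℝ)) ^ n * mn (Set.range Yv) := by
                  rw [mul_pow]; ring
              _ ≤ (δ * (K : ℝ)) ^ n * 1 :=
                  mul_le_mul_of_nonneg_left hmnY1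
                    (pow_nonneg (mul_nonneg hδ0 hKR.le) n)
              _ = (δ * (K : ℝ)) ^ n := mul_one _
              _ < μ ^ n := pow_lt_pow_left₀ hδK (mul_nonneg hδ0 hKR.le) hn0
              _ ≤ mn (condRange Yv Xv xv) := hμn
          exact absurd hfinal (lt_irrefl _)
        exact uniq S hS S' hS' (condRange Yv Xv xv') (fact8 xv' hxv')
          (hsubC.trans hCnS) hCnS'

    -- choices and counting
    have hpick : ∀ S : Set (Fin n → 𝒴), ∃ xv : Fin n → 𝒳,
        S ∈ Fn → xv ∈ Set.range Xv ∧ condRange Yv Xv xv ⊆ S := by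
      intro S
      by_cases hS : S ∈ Fn
      · obtain ⟨xv, h1, h2⟩ := (hFn.2.1 S hS).2
        exact ⟨xv, fun _ => ⟨h1, h2⟩⟩
      · exact ⟨Xv ω₀, fun h => absurd h hS⟩
    choose xvS hxvS using hpick
    have hpickT : ∀ (i : Fin n) (x : 𝒳), ∃ T : Set 𝒴,
        (x ∈ Set.range fun ω => Xv ω i) → T ∈ F i ∧
          condRange (fun ω => Yv ω i) (fun ω => Xv ω i) x ⊆ T := by
      intro i x
      by_cases hx : x ∈ Set.range fun ω => Xv ω i
      · obtain ⟨T, hT1, hT2⟩ := (hF i).2.2.2 x hx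
        exact ⟨T, fun _ => ⟨hT1, hT2⟩⟩
      · exact ⟨∅, fun h => absurd h hx⟩
    choose Tf hTf using hpickT
    have hcard : hFnfin.toFinset.card ≤
        (Fintype.piFinset fun i => (hFfin i).toFinset).card := by
      refine Finset.card_le_card_of_injOn (fun S i => Tf i (xvS S i)) ?_ ?_
      · intro S hS
        rw [Finset.mem_coe, Set.Finite.mem_toFinset] at hS
        rw [Finset.mem_coe, Fintype.mem_piFinset]
        intro i
        rw [Set.Finite.mem_toFinset]
        exact (hTf i _ (hxiran _ (hxvS S hS).1 i)).1
      · intro S hS S' hS' h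
        rw [Set.Finite.coe_toFinset] at hS hS'
        refine hinj S hS S' hS' (xvS S) (hxvS S hS).1 (xvS S') (hxvS S' hS').1
          (hxvS S hS).2 (hxvS S' hS').2 ?_
        intro i
        refine ⟨Tf i (xvS S i), (hTf i _ (hxiran _ (hxvS S hS).1 i)).1,
          (hTf i _ (hxiran _ (hxvS S hS).1 i)).2, ?_⟩
        have hTi : Tf i (xvS S i) = Tf i (xvS S' i) := congrFun h i
        rw [hTi]
        exact (hTf i _ (hxiran _ (hxvS S' hS').1 i)).2
    calc Fn.ncard = hFnfin.toFinset.card := Set.ncard_eq_toFinset_card _ hFnfin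
      _ ≤ (Fintype.piFinset fun i => (hFfin i).toFinset).card := hcard
      _ = ∏ i, (hFfin i).toFinset.card := Fintype.card_piFinset _
      _ = ∏ i, (F i).ncard := by
          exact Finset.prod_congr rfl fun i _ => (Set.ncard_eq_toFinset_card _ (hFfin i)).symm
  refine ⟨key, ?_⟩
  rcases Nat.eq_zero_or_pos Fn.ncard with h0 | hpos
  · rw [h0]
    simp only [Nat.cast_zero, Real.logb_zero]
    refine Finset.sum_nonneg fun i _ => ?_
    rcases Nat.eq_zero_or_pos (F i).ncard with h | h
    · simp [h]
    · exact Real.logb_nonneg one_lt_two (by exact_mod_cast h)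
  · have hfac : ∀ i : Fin n, ((F i).ncard : ℝ) ≠ 0 := by
      intro i
      have hne : (F i).ncard ≠ 0 := by
        intro h
        have : ∏ j, (F j).ncard = 0 := Finset.prod_eq_zero (Finset.mem_univ i) h
        omega
      exact_mod_cast hne
    have h1 : Real.logb 2 (Fn.ncard : ℝ) ≤ Real.logb 2 ((∏ i, (F i).ncard : ℕ) : ℝ) := by
      rw [Real.logb_le_logb one_lt_two (by exact_mod_cast hpos)
        (by exact_mod_cast lt_of_lt_of_le hpos key)]
      exact_mod_cast key
    refine le_trans h1 (le_of_eq ?_)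
    rw [Nat.cast_prod, Real.logb_prod _ _ fun i _ => hfac i]

end NSIT
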